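/- Let f : {0,1}^n → {-1,1} have threshold degree d, and suppose f^KP(x,y,z) = sign(Σ_{S∈𝒮} λ_S χ_S(x,y,z)) for a family 𝒮 of subsets of the 3n variables and reals λ_S, where f^KP(x,y,z) = f(…, (¬z_i ∧ x_i) ∨ (z_i ∧ y_i), …). Then |𝒮| ≥ 2^d. In other words, dns(f^KP) ≥ 2^{deg_±(f)}. -/

import Mathlib

open Finset MvPolynomial

namespace KP19

variable {n : ℕ}

abbrev KPV (n : ℕ) := Fin n ⊕ Fin n ⊕ Fin n

def bvar (x y z : Fin n → Bool) : KPV n → Bool := Sum.elim x (Sum.elim y z)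

def isZb : KPV n → Bool := Sum.elim (fun _ => false) (Sum.elim (fun _ => false) (fun _ => true))

def vidx : KPV n → Fin n := Sum.elim id (Sum.elim id id)

def goodb (z : Fin n → Bool) : KPV n → Bool := Sum.elim (fun i => !z i) (Sum.elim z (fun _ => true))

def KPGood (S : Finset (KPV n)) (z : Fin n → Bool) : Prop := ∀ v ∈ S, goodb z v = true

instance (S : Finset (KPV n)) (z : Fin n → Bool) : Decidable (KPGood S z) := by
  unfold KPGood; infer_instance

def wdeg (S : Finset (KPV n)) : ℕ := (S.filter fun v => isZb v = false).card

def xs (w u z : Fin n → Bool) : Fin n → Bool := fun i => if z i then u i else w i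
def ys (w u z : Fin n → Bool) : Fin n → Bool := fun i => if z i then w i else u i

lemma sel_eq (w u z : Fin n → Bool) :
    (fun i => if z i then ys w u z i else xs w u z i) = w := by
  funext i; by_cases h : z i <;> simp [xs, ys, h]

lemma sum_neg_flip {β : Type*} [Fintype β] (e : Equiv.Perm β) (F : β → ℝ)
    (h : ∀ u, F (e u) = -F u) : ∑ u, F u = 0 := by
  have h1 : ∑ u, F (e u) = ∑ u, F u := Equiv.sum_comp e F
  have h2 : ∑ u, F (e u) = -∑ u, F u := by
    rw [show (∑ u, F (e u)) = ∑ u, -F u from Finset.sum_congr rfl (fun u _ => h u)]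
    simp
  linarith

lemma pow_card_filter_flip {α : Type*} [DecidableEq α] (S : Finset α) (p q : α → Prop)
    [DecidablePred p] [DecidablePred q]
    (v₀ : α) (hv₀ : v₀ ∈ S) (hpq : ∀ v ∈ S, v ≠ v₀ → (p v ↔ q v)) (hflip : p v₀ ↔ ¬ q v₀) :
    ((-1 : ℝ)) ^ (S.filter p).card = -((-1 : ℝ)) ^ (S.filter q).card := by
  by_cases hq : q v₀
  · have hfe : S.filter p = (S.filter q).erase v₀ := by
      ext a
      simp only [Finset.mem_erase, Finset.mem_filter]
      constructor
      · rintro ⟨haS, hpa⟩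
        have hne : a ≠ v₀ := by
          rintro rfl; exact (hflip.1 hpa) hq
        exact ⟨hne, haS, (hpq a haS hne).1 hpa⟩
      · rintro ⟨hne, haS, hqa⟩
        exact ⟨haS, (hpq a haS hne).2 hqa⟩
    have hmem : v₀ ∈ S.filter q := Finset.mem_filter.2 ⟨hv₀, hq⟩
    have hcpos : 0 < (S.filter q).card := Finset.card_pos.2 ⟨v₀, hmem⟩
    rw [hfe, Finset.card_erase_of_mem hmem]
    have h1 : (S.filter q).card = ((S.filter q).card - 1) + 1 := (Nat.succ_pred_eq_of_pos hcpos).symm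
    conv_rhs => rw [h1, pow_succ]
    ring
  · have hp : p v₀ := hflip.2 hq
    have hfe : S.filter p = insert v₀ (S.filter q) := by
      ext a
      simp only [Finset.mem_insert, Finset.mem_filter]
      constructor
      · rintro ⟨haS, hpa⟩
        by_cases hne : a = v₀
        · exact Or.inl hne
        · exact Or.inr ⟨haS, (hpq a haS hne).1 hpa⟩
      · rintro (rfl | ⟨haS, hqa⟩)
        · exact ⟨hv₀, hp⟩
        · exact ⟨haS, (hpq a haS (fun h => hq (h ▸ hqa))).2 hqa⟩
    have hnmem : v₀ ∉ S.filter q := fun h => hq (Finset.mem_filter.1 h).2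
    rw [hfe, Finset.card_insert_of_notMem hnmem, pow_succ]
    ring


def flipAt (i : Fin n) : Equiv.Perm (Fin n → Bool) :=
  Function.Involutive.toPerm (fun u => Function.update u i (!u i)) (by
    intro u; funext j
    by_cases h : j = i
    · subst h; simp
    · simp [Function.update_of_ne h])

lemma flipAt_apply (i : Fin n) (u : Fin n → Bool) :
    flipAt i u = Function.update u i (!u i) := rfl

lemma flip_sum (S : Finset (KPV n)) (z w : Fin n → Bool) (hS : ¬ KPGood S z) :
    ∑ u : Fin n → Bool,
      ((-1 : ℝ)) ^ (S.filter fun v => bvar (xs w u z) (ys w u z) z v = true).card = 0 := by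
  unfold KPGood at hS
  push_neg at hS
  obtain ⟨v₀, hv₀S, hbad⟩ := hS
  have hbad' : goodb z v₀ = false := by simpa using hbad
  rcases v₀ with i | i | j
  · -- x-variable, z i = true
    have hzi : z i = true := by simpa [goodb] using hbad'
    apply sum_neg_flip (flipAt i)
    intro u
    apply pow_card_filter_flip S _ _ (Sum.inl i) hv₀S
    · intro v hvS hne
      have : bvar (xs w (flipAt i u) z) (ys w (flipAt i u) z) z v
          = bvar (xs w u z) (ys w u z) z v := by
        rcases v with a | a | a
        · have ha : a ≠ i := fun h => hne (by rw [h])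
          simp [bvar, xs, flipAt_apply, Function.update_of_ne ha]
        · by_cases ha : a = i
          · subst ha; simp [bvar, ys, hzi]
          · simp [bvar, ys, flipAt_apply, Function.update_of_ne ha]
        · simp [bvar]
      rw [this]
    · have h1 : bvar (xs w (flipAt i u) z) (ys w (flipAt i u) z) z (Sum.inl i) = !u i := by
        simp [bvar, xs, flipAt_apply, hzi]
      have h2 : bvar (xs w u z) (ys w u z) z (Sum.inl i) = u i := by
        simp [bvar, xs, hzi]
      rw [h1, h2]
      cases u i <;> simp
  · -- y-variable, z i = false
    have hzi : z i = false := by simpa [goodb] using hbad'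
    apply sum_neg_flip (flipAt i)
    intro u
    apply pow_card_filter_flip S _ _ (Sum.inr (Sum.inl i)) hv₀S
    · intro v hvS hne
      have : bvar (xs w (flipAt i u) z) (ys w (flipAt i u) z) z v
          = bvar (xs w u z) (ys w u z) z v := by
        rcases v with a | a | a
        · by_cases ha : a = i
          · subst ha; simp [bvar, xs, hzi]
          · simp [bvar, xs, flipAt_apply, Function.update_of_ne ha]
        · have ha : a ≠ i := fun h => hne (by rw [h])
          simp [bvar, ys, flipAt_apply, Function.update_of_ne ha]
        · simp [bvar]
      rw [this]
    · have h1 : bvar (xs w (flipAt i u) z) (ys w (flipAt i u) z) z (Sum.inr (Sum.inl i)) = !u i := by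
        simp [bvar, ys, flipAt_apply, hzi]
      have h2 : bvar (xs w u z) (ys w u z) z (Sum.inr (Sum.inl i)) = u i := by
        simp [bvar, ys, hzi]
      rw [h1, h2]
      cases u i <;> simp
  · simp [goodb] at hbad'


lemma good_filter_eq {S : Finset (KPV n)} {z : Fin n → Bool} (hg : KPGood S z)
    (w u : Fin n → Bool) :
    S.filter (fun v => bvar (xs w u z) (ys w u z) z v = true)
      = S.filter (fun v => bvar w w z v = true) := by
  apply Finset.filter_congr
  intro v hv
  have hgv := hg v hv
  rcases v with a | a | a
  · have hza : z a = false := by simpa [goodb] using hgv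
    simp [bvar, xs, hza]
  · have hza : z a = true := by simpa [goodb] using hgv
    simp [bvar, ys, hza]
  · simp [bvar]

lemma prod_ite_neg {α : Type*} (F : Finset α) (p : α → Prop) [DecidablePred p] :
    (∏ v ∈ F, (if p v then (-1 : ℝ) else 1)) = (-1 : ℝ) ^ (F.filter p).card := by
  rw [Finset.prod_ite, Finset.prod_const, Finset.prod_const, one_pow, mul_one]

lemma card_split (S : Finset (KPV n)) (w z : Fin n → Bool) :
    (S.filter fun v => bvar w w z v = true).card
      = (S.filter fun v => bvar (fun _ => false) (fun _ => false) z v = true).card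
        + ((S.filter fun v => isZb v = false).filter fun v => w (vidx v) = true).card := by
  classical
  have h := Finset.card_filter_add_card_filter_not
    (s := S.filter fun v => bvar w w z v = true) (p := fun v => isZb v = true)
  have h1 : (S.filter fun v => bvar w w z v = true).filter (fun v => isZb v = true)
      = S.filter fun v => bvar (fun _ => false) (fun _ => false) z v = true := by
    ext v
    rcases v with a | a | a <;> simp only [Finset.mem_filter] <;> simp [bvar, isZb]
  have h2 : (S.filter fun v => bvar w w z v = true).filter (fun v => ¬ isZb v = true)
      = (S.filter fun v => isZb v = false).filter fun v => w (vidx v) = true := by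
    ext v
    rcases v with a | a | a <;> simp only [Finset.mem_filter] <;> simp [bvar, isZb, vidx, and_comm]
  rw [h1, h2] at h
  omega

lemma wdeg_eq (S : Finset (KPV n)) :
    wdeg S = (univ.filter fun i : Fin n => (Sum.inl i : KPV n) ∈ S).card
      + (univ.filter fun i : Fin n => (Sum.inr (Sum.inl i) : KPV n) ∈ S).card := by
  classical
  have he : S.filter (fun v => isZb v = false)
      = ((univ.filter fun i : Fin n => (Sum.inl i : KPV n) ∈ S).image (fun i => (Sum.inl i : KPV n)))
        ∪ ((univ.filter fun i : Fin n => (Sum.inr (Sum.inl i) : KPV n) ∈ S).image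
            (fun i => Sum.inr (Sum.inl i))) := by
    ext v
    rcases v with a | a | a <;> simp only [Finset.mem_filter, Finset.mem_union, Finset.mem_image] <;> simp [isZb]
  have hdisj : Disjoint
      ((univ.filter fun i : Fin n => (Sum.inl i : KPV n) ∈ S).image (fun i => (Sum.inl i : KPV n)))
      ((univ.filter fun i : Fin n => (Sum.inr (Sum.inl i) : KPV n) ∈ S).image
          (fun i => Sum.inr (Sum.inl i))) := by
    rw [Finset.disjoint_left]
    rintro v hv1 hv2
    simp only [Finset.mem_image] at hv1 hv2
    obtain ⟨a, _, rfl⟩ := hv1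
    obtain ⟨b, _, hb⟩ := hv2
    exact Sum.inr_ne_inl hb
  rw [wdeg, he, Finset.card_union_of_disjoint hdisj,
    Finset.card_image_of_injective _ (fun a b h => Sum.inl_injective h),
    Finset.card_image_of_injective _ (fun a b h => Sum.inl_injective (Sum.inr_injective h))]

lemma good_x_false {S : Finset (KPV n)} {z : Fin n → Bool} (hg : KPGood S z)
    {i : Fin n} (hi : (Sum.inl i : KPV n) ∈ S) : z i = false := by
  have := hg _ hi; simpa [goodb] using this

lemma good_y_true {S : Finset (KPV n)} {z : Fin n → Bool} (hg : KPGood S z)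
    {i : Fin n} (hi : (Sum.inr (Sum.inl i) : KPV n) ∈ S) : z i = true := by
  have := hg _ hi; simpa [goodb] using this

lemma count_good (S : Finset (KPV n)) (d : ℕ) (hd' : d ≤ wdeg S) :
    (univ.filter fun z : Fin n → Bool => KPGood S z).card ≤ 2 ^ (n - d) := by
  classical
  rcases (univ.filter fun z : Fin n → Bool => KPGood S z).eq_empty_or_nonempty with he | ⟨z₀, hz₀⟩
  · simp [he]
  · have hg₀ : KPGood S z₀ := (Finset.mem_filter.1 hz₀).2
    set Ax := univ.filter fun i : Fin n => (Sum.inl i : KPV n) ∈ S with hAx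
    set Ay := univ.filter fun i : Fin n => (Sum.inr (Sum.inl i) : KPV n) ∈ S with hAy
    have hdisj : Disjoint Ax Ay := by
      rw [Finset.disjoint_left]
      intro i hix hiy
      have h1 := good_x_false hg₀ (Finset.mem_filter.1 hix).2
      have h2 := good_y_true hg₀ (Finset.mem_filter.1 hiy).2
      rw [h1] at h2; exact Bool.noConfusion h2
    have hcardB : d ≤ (Ax ∪ Ay).card := by
      rw [Finset.card_union_of_disjoint hdisj]
      rw [wdeg_eq] at hd'
      exact hd'
    have hinj : (univ.filter fun z : Fin n → Bool => KPGood S z).card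
        ≤ Fintype.card ((↥((Ax ∪ Ay)ᶜ : Finset (Fin n))) → Bool) := by
      rw [← Finset.card_univ]
      apply Finset.card_le_card_of_injOn
        (fun z (j : ↥((Ax ∪ Ay)ᶜ : Finset (Fin n))) => z j)
        (fun _ _ => Finset.mem_univ _)
      intro z₁ h₁ z₂ h₂ hφ
      have hg₁ : KPGood S z₁ := (Finset.mem_filter.1 (Finset.mem_coe.1 h₁)).2
      have hg₂ : KPGood S z₂ := (Finset.mem_filter.1 (Finset.mem_coe.1 h₂)).2
      funext i
      by_cases hiB : i ∈ Ax ∪ Ay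
      · rcases Finset.mem_union.1 hiB with hix | hiy
        · rw [good_x_false hg₁ (Finset.mem_filter.1 hix).2,
            good_x_false hg₂ (Finset.mem_filter.1 hix).2]
        · rw [good_y_true hg₁ (Finset.mem_filter.1 hiy).2,
            good_y_true hg₂ (Finset.mem_filter.1 hiy).2]
      · exact congrFun hφ ⟨i, Finset.mem_compl.2 hiB⟩
    have hcard : Fintype.card ((↥((Ax ∪ Ay)ᶜ : Finset (Fin n))) → Bool)
        = 2 ^ (n - (Ax ∪ Ay).card) := by
      rw [Fintype.card_fun, Fintype.card_coe, Finset.card_compl, Fintype.card_bool,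
        Fintype.card_fin]
    refine hinj.trans ?_
    rw [hcard]
    exact Nat.pow_le_pow_right (by norm_num) (Nat.sub_le_sub_left hcardB n)

lemma wdeg_le_n {S : Finset (KPV n)} {z : Fin n → Bool} (hg : KPGood S z) : wdeg S ≤ n := by
  classical
  set Ax := univ.filter fun i : Fin n => (Sum.inl i : KPV n) ∈ S with hAx
  set Ay := univ.filter fun i : Fin n => (Sum.inr (Sum.inl i) : KPV n) ∈ S with hAy
  have hdisj : Disjoint Ax Ay := by
    rw [Finset.disjoint_left]
    intro i hix hiy
    have h1 := good_x_false hg (Finset.mem_filter.1 hix).2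
    have h2 := good_y_true hg (Finset.mem_filter.1 hiy).2
    rw [h1] at h2; exact Bool.noConfusion h2
  rw [wdeg_eq]
  calc Ax.card + Ay.card = (Ax ∪ Ay).card := (Finset.card_union_of_disjoint hdisj).symm
    _ ≤ (univ : Finset (Fin n)).card := Finset.card_le_card (Finset.subset_univ _)
    _ = n := by simp


end KP19

open KP19 in
theorem stmt19 {n d : ℕ} (f : (Fin n → Bool) → ℝ)
    (hf : ∀ x, f x = 1 ∨ f x = -1)
    (hd : IsLeast {d' : ℕ | ∃ P : MvPolynomial (Fin n) ℝ, P.totalDegree ≤ d' ∧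
        ∀ x : Fin n → Bool,
          f x = Real.sign (MvPolynomial.eval (fun i => if x i then (1 : ℝ) else 0) P)} d)
    (𝒮 : Finset (Finset (Fin n ⊕ Fin n ⊕ Fin n)))
    (lam : Finset (Fin n ⊕ Fin n ⊕ Fin n) → ℝ)
    (hrep : ∀ x y z : Fin n → Bool,
      (∑ S ∈ 𝒮, lam S *
          (-1 : ℝ) ^ (S.filter fun v => Sum.elim x (Sum.elim y z) v).card) ≠ 0 ∧
      f (fun i => if z i then y i else x i) =
        Real.sign (∑ S ∈ 𝒮, lam S *
          (-1 : ℝ) ^ (S.filter fun v => Sum.elim x (Sum.elim y z) v).card)) :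
    2 ^ d ≤ 𝒮.card := by
  classical
  have key : ∀ z : Fin n → Bool, ∃ S ∈ 𝒮, KPGood S z ∧ d ≤ wdeg S := by
    intro z
    by_contra hcon
    push_neg at hcon
    set P : MvPolynomial (Fin n) ℝ :=
      ∑ S ∈ 𝒮.filter (fun S => KPGood S z),
        MvPolynomial.C (lam S * (-1 : ℝ) ^ (S.filter fun v =>
            bvar (fun _ => false) (fun _ => false) z v = true).card)
          * ∏ v ∈ S.filter (fun v => isZb v = false), (1 - 2 * MvPolynomial.X (vidx v)) with hP
    have hPsign : ∀ w : Fin n → Bool,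
        f w = Real.sign (MvPolynomial.eval (fun i => if w i then (1 : ℝ) else 0) P) := by
      intro w
      set ew : Fin n → ℝ := fun i => if w i then (1 : ℝ) else 0 with hew
      have hgu : ∀ u : Fin n → Bool,
          (∑ S ∈ 𝒮, lam S * (-1 : ℝ) ^ (S.filter fun v =>
              bvar (xs w u z) (ys w u z) z v = true).card) ≠ 0 ∧
          f w = Real.sign (∑ S ∈ 𝒮, lam S * (-1 : ℝ) ^ (S.filter fun v =>
              bvar (xs w u z) (ys w u z) z v = true).card) := by
        intro u
        have h := hrep (xs w u z) (ys w u z) z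
        rw [sel_eq w u z] at h
        exact h
      have hL : MvPolynomial.eval ew P
          = ∑ S ∈ 𝒮.filter (fun S => KPGood S z),
              lam S * (-1 : ℝ) ^ (S.filter fun v => bvar w w z v = true).card := by
        rw [hP, map_sum]
        apply Finset.sum_congr rfl
        intro S hS
        rw [map_mul, MvPolynomial.eval_C, map_prod]
        have hprod : ∀ v ∈ S.filter (fun v => isZb v = false),
            MvPolynomial.eval ew (1 - 2 * MvPolynomial.X (vidx v))
              = (if w (vidx v) = true then (-1 : ℝ) else 1) := by
          intro v _
          by_cases hwv : w (vidx v) <;> simp [hew, hwv] <;> norm_num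
        rw [Finset.prod_congr rfl hprod, prod_ite_neg, card_split S w z, pow_add]
        ring
      have hkey : (2 ^ n : ℝ) * MvPolynomial.eval ew P
          = ∑ u : Fin n → Bool, ∑ S ∈ 𝒮, lam S * (-1 : ℝ) ^ (S.filter fun v =>
              bvar (xs w u z) (ys w u z) z v = true).card := by
        rw [Finset.sum_comm]
        rw [← Finset.sum_filter_add_sum_filter_not 𝒮 (fun S => KPGood S z)]
        have hbadpart : (∑ S ∈ 𝒮.filter (fun S => ¬ KPGood S z), ∑ u : Fin n → Bool,
            lam S * (-1 : ℝ) ^ (S.filter fun v =>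
              bvar (xs w u z) (ys w u z) z v = true).card) = 0 := by
          apply Finset.sum_eq_zero
          intro S hS
          rw [← Finset.mul_sum, flip_sum S z w (Finset.mem_filter.1 hS).2, mul_zero]
        rw [hbadpart, add_zero, hL, Finset.mul_sum]
        apply Finset.sum_congr rfl
        intro S hS
        have hg := (Finset.mem_filter.1 hS).2
        have hc : ∀ u : Fin n → Bool,
            (S.filter fun v => bvar (xs w u z) (ys w u z) z v = true).card
              = (S.filter fun v => bvar w w z v = true).card := fun u => by
          rw [good_filter_eq hg w u]
        calc (2 ^ n : ℝ) * (lam S * (-1 : ℝ) ^ (S.filter fun v => bvar w w z v = true).card)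
            = ∑ _u : Fin n → Bool, lam S * (-1 : ℝ) ^ (S.filter fun v =>
                bvar w w z v = true).card := by
              rw [Finset.sum_const, Finset.card_univ, Fintype.card_fun, Fintype.card_bool,
                Fintype.card_fin, nsmul_eq_mul]
              push_cast
              ring
          _ = ∑ u : Fin n → Bool, lam S * (-1 : ℝ) ^ (S.filter fun v =>
                bvar (xs w u z) (ys w u z) z v = true).card :=
              Finset.sum_congr rfl (fun u _ => by rw [hc u])
      have h2n : (0 : ℝ) < 2 ^ n := by positivity
      rcases hf w with hfw | hfw
      · have hpos : ∀ u : Fin n → Bool, 0 < ∑ S ∈ 𝒮, lam S * (-1 : ℝ) ^ (S.filter fun v =>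
            bvar (xs w u z) (ys w u z) z v = true).card := by
          intro u
          obtain ⟨hne, hsg⟩ := hgu u
          rw [hfw] at hsg
          rcases lt_trichotomy (∑ S ∈ 𝒮, lam S * (-1 : ℝ) ^ (S.filter fun v =>
              bvar (xs w u z) (ys w u z) z v = true).card) 0 with h | h | h
          · rw [Real.sign_of_neg h] at hsg; norm_num at hsg
          · exact absurd h hne
          · exact h
        have hsum : 0 < ∑ u : Fin n → Bool, ∑ S ∈ 𝒮, lam S * (-1 : ℝ) ^ (S.filter fun v =>
            bvar (xs w u z) (ys w u z) z v = true).card :=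
          Finset.sum_pos (fun u _ => hpos u) Finset.univ_nonempty
        rw [← hkey] at hsum
        have heval : 0 < MvPolynomial.eval ew P := by nlinarith
        rw [hfw, Real.sign_of_pos heval]
      · have hneg : ∀ u : Fin n → Bool, (∑ S ∈ 𝒮, lam S * (-1 : ℝ) ^ (S.filter fun v =>
            bvar (xs w u z) (ys w u z) z v = true).card) < 0 := by
          intro u
          obtain ⟨hne, hsg⟩ := hgu u
          rw [hfw] at hsg
          rcases lt_trichotomy (∑ S ∈ 𝒮, lam S * (-1 : ℝ) ^ (S.filter fun v =>
              bvar (xs w u z) (ys w u z) z v = true).card) 0 with h | h | h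
          · exact h
          · exact absurd h hne
          · rw [Real.sign_of_pos h] at hsg; norm_num at hsg
        have hsum : (∑ u : Fin n → Bool, ∑ S ∈ 𝒮, lam S * (-1 : ℝ) ^ (S.filter fun v =>
            bvar (xs w u z) (ys w u z) z v = true).card) < 0 := by
          have := Finset.sum_pos (fun u (_ : u ∈ (univ : Finset (Fin n → Bool))) =>
            neg_pos.2 (hneg u)) Finset.univ_nonempty
          rw [Finset.sum_neg_distrib] at this
          linarith
        rw [← hkey] at hsum
        have heval : MvPolynomial.eval ew P < 0 := by nlinarith
        rw [hfw, Real.sign_of_neg heval]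
    rcases Nat.eq_zero_or_pos d with hd0 | hdpos
    · have hempty : 𝒮.filter (fun S => KPGood S z) = ∅ := by
        rw [Finset.filter_eq_empty_iff]
        intro S hS hgood
        have := hcon S hS hgood
        omega
      have hP0 : P = 0 := by rw [hP, hempty, Finset.sum_empty]
      have h0 := hPsign (fun _ => false)
      rw [hP0] at h0
      simp only [map_zero, Real.sign_zero] at h0
      rcases hf (fun _ => false) with h | h <;> rw [h0] at h <;> norm_num at h
    · have hdeg : P.totalDegree ≤ d - 1 := by
        rw [hP]
        refine (MvPolynomial.totalDegree_finset_sum _ _).trans ?_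
        apply Finset.sup_le
        intro S hS
        obtain ⟨hS𝒮, hgood⟩ := Finset.mem_filter.1 hS
        have hw : wdeg S < d := hcon S hS𝒮 hgood
        refine le_trans ?_ (show wdeg S ≤ d - 1 by omega)
        refine (MvPolynomial.totalDegree_mul _ _).trans ?_
        rw [MvPolynomial.totalDegree_C, zero_add]
        refine (MvPolynomial.totalDegree_finset_prod _ _).trans ?_
        rw [wdeg]
        refine le_trans (Finset.sum_le_card_nsmul _ _ 1 ?_) (by simp)
        intro v _
        have hfac : (1 - 2 * MvPolynomial.X (vidx v) : MvPolynomial (Fin n) ℝ)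
            = MvPolynomial.C (-2) * MvPolynomial.X (vidx v) + 1 := by
          rw [MvPolynomial.C_neg, map_ofNat]
          ring
        rw [hfac]
        refine le_trans (MvPolynomial.totalDegree_add _ _) (max_le ?_ ?_)
        · refine (MvPolynomial.totalDegree_mul _ _).trans ?_
          simp [MvPolynomial.totalDegree_C, MvPolynomial.totalDegree_X]
        · simp [MvPolynomial.totalDegree_one]
      have hmem : (d - 1) ∈ {d' : ℕ | ∃ P : MvPolynomial (Fin n) ℝ, P.totalDegree ≤ d' ∧
          ∀ x : Fin n → Bool,
            f x = Real.sign (MvPolynomial.eval (fun i => if x i then (1 : ℝ) else 0) P)} :=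
        ⟨P, hdeg, hPsign⟩
      have := hd.2 hmem
      omega
  have hdn : d ≤ n := by
    obtain ⟨S, _, hgood, hdw⟩ := key (fun _ => false)
    exact hdw.trans (wdeg_le_n hgood)
  have hcover : (univ : Finset (Fin n → Bool))
      ⊆ 𝒮.biUnion (fun S => univ.filter fun z => KPGood S z ∧ d ≤ wdeg S) := by
    intro z _
    obtain ⟨S, hS, h1, h2⟩ := key z
    exact Finset.mem_biUnion.2 ⟨S, hS, Finset.mem_filter.2 ⟨Finset.mem_univ _, h1, h2⟩⟩
  have hcount : (2 : ℕ) ^ n ≤ 𝒮.card * 2 ^ (n - d) := by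
    calc (2 : ℕ) ^ n = (univ : Finset (Fin n → Bool)).card := by
          rw [Finset.card_univ, Fintype.card_fun, Fintype.card_bool, Fintype.card_fin]
      _ ≤ (𝒮.biUnion (fun S => univ.filter fun z => KPGood S z ∧ d ≤ wdeg S)).card :=
          Finset.card_le_card hcover
      _ ≤ ∑ S ∈ 𝒮, (univ.filter fun z : Fin n → Bool => KPGood S z ∧ d ≤ wdeg S).card :=
          Finset.card_biUnion_le
      _ ≤ ∑ _S ∈ 𝒮, 2 ^ (n - d) := by
          apply Finset.sum_le_sum
          intro S _
          by_cases hdw : d ≤ wdeg S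
          · refine le_trans (Finset.card_le_card ?_) (count_good S d hdw)
            intro z hz
            exact Finset.mem_filter.2 ⟨Finset.mem_univ _, (Finset.mem_filter.1 hz).2.1⟩
          · have hempty : (univ.filter fun z : Fin n → Bool => KPGood S z ∧ d ≤ wdeg S) = ∅ := by
              rw [Finset.filter_eq_empty_iff]
              intro z _
              rintro ⟨_, h⟩
              exact hdw h
            simp [hempty]
      _ = 𝒮.card * 2 ^ (n - d) := by rw [Finset.sum_const, smul_eq_mul]
  have hmul : 2 ^ (n - d) * 2 ^ d ≤ 2 ^ (n - d) * 𝒮.card := by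
    rw [← pow_add, Nat.sub_add_cancel hdn]
    calc 2 ^ n ≤ 𝒮.card * 2 ^ (n - d) := hcount
      _ = 2 ^ (n - d) * 𝒮.card := Nat.mul_comm _ _
  exact Nat.le_of_mul_le_mul_left hmul (Nat.pow_pos (by norm_num))
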